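/- For q ≤ −4, in the abelian group H₁ = coker(L_{−2,q,1}) presented by the (|q|+5)×(|q|+5) linking matrix with first row (−3,−1,−1,−1,−1,…,−1), second through fourth rows (−1,0,−1,−1,0,…,0), (−1,−1,0,−1,0,…,0), (−1,−1,−1,0,0,…,0), and remaining rows (−1,0,0,0) followed by the block A_{|q|}, one has H₁ ≅ ℤ/(|q|−2), and the class of μ₁ equals (|q|−4) times the generator μ₂. -/

import Mathlib

/-- The cokernel `ℤⁿ / M ℤⁿ` of a square integer matrix `M`. -/
abbrev matrixCoker {n : ℕ} (M : Matrix (Fin n) (Fin n) ℤ) :=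
  (Fin n → ℤ) ⧸ LinearMap.range M.mulVecLin

/-- The class `μ_i` of the `i`-th standard basis vector in the cokernel of `M`. -/
def mu {n : ℕ} (M : Matrix (Fin n) (Fin n) ℤ) (i : Fin n) : matrixCoker M :=
  Submodule.Quotient.mk (Pi.single i 1)

/-- The `(|q|+5) × (|q|+5)` linking matrix `L_{-2,q,1}`: first row
`(-3,-1,-1,…,-1)`, rows 2–4 forming the block `A_2` (zero diagonal, `-1` off-diagonal)
each linking the first curve once, and the remaining rows forming the block `A_{|q|}`
(zero diagonal, `-1` off-diagonal), each linking the first curve once. -/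
def L6mat (s : ℕ) : Matrix (Fin (s + 5)) (Fin (s + 5)) ℤ :=
  Matrix.of fun i j =>
    if (i : ℕ) = 0 ∧ (j : ℕ) = 0 then -3
    else if (i : ℕ) = 0 ∨ (j : ℕ) = 0 then -1
    else if (i : ℕ) ≤ 3 ∧ (j : ℕ) ≤ 3 then (if i = j then 0 else -1)
    else if (i : ℕ) ≤ 3 ∨ (j : ℕ) ≤ 3 then 0
    else if i = j then 0 else -1

open Finset Matrix

def mrowN (i j : ℕ) : ℤ :=
  if i = 0 ∧ j = 0 then -3
  else if i = 0 ∨ j = 0 then -1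
  else if i ≤ 3 ∧ j ≤ 3 then (if i = j then 0 else -1)
  else if i ≤ 3 ∨ j ≤ 3 then 0
  else if i = j then 0 else -1


lemma L6_mulVec (s : ℕ) (g : ℕ → ℤ) (i : Fin (s+5)) :
    (L6mat s).mulVec (fun j => g j) i = ∑ j ∈ range (s+5), mrowN i j * g j := by
  rw [← Fin.sum_univ_eq_sum_range (fun j => mrowN (i:ℕ) j * g j) (s+5)]
  simp only [Matrix.mulVec, dotProduct, L6mat, Matrix.of_apply, mrowN, Fin.ext_iff]

lemma row_split (s : ℕ) (F : ℕ → ℤ) :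
    ∑ j ∈ range (s+5), F j = F 0 + F 1 + F 2 + F 3 + ∑ j ∈ Ico 4 (s+5), F j := by
  rw [range_eq_Ico, ← Finset.sum_Ico_consecutive F (Nat.zero_le 4) (by omega)]
  congr 1
  rw [← range_eq_Ico]
  simp [Finset.sum_range_succ]

lemma tail_zero (s : ℕ) (F : ℕ → ℤ) (h : ∀ j, 4 ≤ j → F j = 0) :
    ∑ j ∈ Ico 4 (s+5), F j = 0 :=
  Finset.sum_eq_zero fun j hj => h j (Finset.mem_Ico.mp hj).1

lemma tail_const (s : ℕ) (F : ℕ → ℤ) (cst : ℤ) (h : ∀ j, 4 ≤ j → F j = cst) :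
    ∑ j ∈ Ico 4 (s+5), F j = ((s:ℤ)+1) * cst := by
  rw [Finset.sum_congr rfl fun j hj => h j (Finset.mem_Ico.mp hj).1, Finset.sum_const,
    Nat.card_Ico]
  have hc : s + 5 - 4 = s + 1 := by omega
  rw [hc]; push_cast [Nat.cast_add]; ring

lemma tail_one_off (s : ℕ) (F : ℕ → ℤ) (k : ℕ) (hk : 4 ≤ k) (hk' : k < s+5)
    (x cst : ℤ) (h : ∀ j, 4 ≤ j → F j = if j = k then x else cst) :
    ∑ j ∈ Ico 4 (s+5), F j = x + (s:ℤ) * cst := by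
  rw [Finset.sum_congr rfl fun j hj => h j (Finset.mem_Ico.mp hj).1]
  have h1 : ∀ j ∈ Ico 4 (s+5), (if j = k then x else cst) = cst + (if j = k then x - cst else 0) := by
    intro j _; split_ifs <;> ring
  rw [Finset.sum_congr rfl h1, Finset.sum_add_distrib, Finset.sum_const, Finset.sum_ite_eq',
    Nat.card_Ico, if_pos (Finset.mem_Ico.mpr ⟨hk, hk'⟩)]
  have hc : s + 5 - 4 = s + 1 := by omega
  rw [hc]; push_cast [Nat.cast_add]; ring

lemma mrowN_zero (j : ℕ) : mrowN 0 j = if j = 0 then -3 else -1 := by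
  unfold mrowN; split_ifs <;> omega

lemma mrowN_123 (i j : ℕ) (h1 : 1 ≤ i) (h2 : i ≤ 3) :
    mrowN i j = if j = i then 0 else if j ≤ 3 then -1 else 0 := by
  unfold mrowN; split_ifs <;> omega

lemma mrowN_big (i j : ℕ) (h : 4 ≤ i) :
    mrowN i j = if j = 0 then -1 else if j ≤ 3 then 0 else if j = i then 0 else -1 := by
  unfold mrowN; split_ifs <;> omega

/-! witnesses -/

-- witness for e₀ + 2e₁ ∈ R
def gC : ℕ → ℤ := fun j => if j = 1 then 1 else if j = 2 ∨ j = 3 then -1 else 0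
def tC : ℕ → ℤ := fun i => if i = 0 then 1 else if i = 1 then 2 else 0

lemma mulVec_gC (s : ℕ) :
    (L6mat s).mulVec (fun j => gC j) = fun i : Fin (s+5) => tC i := by
  funext i
  rw [L6_mulVec, row_split, tail_zero s _ (fun j hj => by
    unfold gC; rw [if_neg (by omega), if_neg (by omega), mul_zero])]
  rcases Nat.lt_or_ge (i:ℕ) 4 with h | h
  · set iv := (i:ℕ) with hiv
    interval_cases iv <;> norm_num [mrowN, gC, tC]
  · rw [mrowN_big _ 0 h, mrowN_big _ 1 h, mrowN_big _ 2 h, mrowN_big _ 3 h]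
    unfold gC tC
    norm_num
    simp only [Fin.ext_iff, Fin.val_zero]
    split_ifs <;> omega



def tA2 : ℕ → ℤ := fun i => if i = 1 then -1 else if i = 2 then 1 else 0
lemma mulVec_gA2 (s : ℕ) :
    (L6mat s).mulVec (fun j => tA2 j) = fun i : Fin (s+5) => tA2 i := by
  funext i
  rw [L6_mulVec, row_split, tail_zero s _ (fun j hj => by
    unfold tA2; rw [if_neg (by omega), if_neg (by omega), mul_zero])]
  rcases Nat.lt_or_ge (i:ℕ) 4 with h | h
  · set iv := (i:ℕ) with hiv
    interval_cases iv <;> norm_num [mrowN, tA2]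
  · rw [mrowN_big _ 0 h, mrowN_big _ 1 h, mrowN_big _ 2 h, mrowN_big _ 3 h]
    unfold tA2
    norm_num
    split_ifs <;> omega

def tA3 : ℕ → ℤ := fun i => if i = 1 then -1 else if i = 3 then 1 else 0
lemma mulVec_gA3 (s : ℕ) :
    (L6mat s).mulVec (fun j => tA3 j) = fun i : Fin (s+5) => tA3 i := by
  funext i
  rw [L6_mulVec, row_split, tail_zero s _ (fun j hj => by
    unfold tA3; rw [if_neg (by omega), if_neg (by omega), mul_zero])]
  rcases Nat.lt_or_ge (i:ℕ) 4 with h | h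
  · set iv := (i:ℕ) with hiv
    interval_cases iv <;> norm_num [mrowN, tA3]
  · rw [mrowN_big _ 0 h, mrowN_big _ 1 h, mrowN_big _ 2 h, mrowN_big _ 3 h]
    unfold tA3
    norm_num
    split_ifs <;> omega


def gB (k : ℕ) : ℕ → ℤ := fun j =>
  if j = 0 then -1 else if j = 2 ∨ j = 3 then 1 else if j = k then 1 else 0
def tB (k : ℕ) : ℕ → ℤ := fun i => if i = 1 then -1 else if i = k then 1 else 0

lemma mulVec_gB (s k : ℕ) (hk : 4 ≤ k) (hk' : k < s + 5) :
    (L6mat s).mulVec (fun j => gB k j) = fun i : Fin (s+5) => tB k i := by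
  have hg0 : gB k 0 = -1 := by norm_num [gB]
  have hg1 : gB k 1 = 0 := by unfold gB; rw [if_neg (by omega), if_neg (by omega), if_neg (by omega)]
  have hg2 : gB k 2 = 1 := by norm_num [gB]
  have hg3 : gB k 3 = 1 := by norm_num [gB]
  funext i
  rw [L6_mulVec, row_split, hg0, hg1, hg2, hg3]
  rcases Nat.lt_or_ge (i:ℕ) 4 with h | h
  · have htB : tB k (i:ℕ) = if (i:ℕ) = 1 then -1 else 0 := by
      unfold tB; split_ifs <;> omega
    rw [htB]
    set iv := (i:ℕ) with hiv
    interval_cases iv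
    · rw [tail_one_off s _ k hk hk' (-1) 0 (fun j hj => by
        rw [mrowN_zero j, if_neg (by omega)]
        unfold gB
        rw [if_neg (by omega), if_neg (by omega)]
        split_ifs <;> ring)]
      norm_num [mrowN]
    · rw [tail_zero s _ (fun j hj => by
        rw [mrowN_123 1 j (by omega) (by omega), if_neg (by omega), if_neg (by omega), zero_mul])]
      norm_num [mrowN]
    · rw [tail_zero s _ (fun j hj => by
        rw [mrowN_123 2 j (by omega) (by omega), if_neg (by omega), if_neg (by omega), zero_mul])]
      norm_num [mrowN]
    · rw [tail_zero s _ (fun j hj => by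
        rw [mrowN_123 3 j (by omega) (by omega), if_neg (by omega), if_neg (by omega), zero_mul])]
      norm_num [mrowN]
  · rw [tail_one_off s _ k hk hk' (if k = (i:ℕ) then 0 else -1) 0 (fun j hj => by
      rw [mrowN_big _ j h]
      unfold gB
      rw [if_neg (show ¬j = 0 by omega), if_neg (show ¬j ≤ 3 by omega),
        if_neg (show ¬j = 0 by omega), if_neg (show ¬(j = 2 ∨ j = 3) by omega)]
      by_cases hjk : j = k
      · subst hjk; simp
      · rw [if_neg hjk, if_neg hjk, mul_zero])]
    rw [mrowN_big _ 0 h, mrowN_big _ 1 h, mrowN_big _ 2 h, mrowN_big _ 3 h]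
    unfold tB
    norm_num
    split_ifs <;> omega


def gE (s : ℕ) : ℕ → ℤ := fun j =>
  if j = 0 then (s:ℤ) else if j = 1 then -1 else if j = 2 ∨ j = 3 then 1-(s:ℤ) else -1
def tE (s : ℕ) : ℕ → ℤ := fun i => if i = 1 then (s:ℤ)-2 else 0

lemma mulVec_gE (s : ℕ) :
    (L6mat s).mulVec (fun j => gE s j) = fun i : Fin (s+5) => tE s i := by
  have hg0 : gE s 0 = (s:ℤ) := by norm_num [gE]
  have hg1 : gE s 1 = -1 := by norm_num [gE]
  have hg2 : gE s 2 = 1-(s:ℤ) := by norm_num [gE]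
  have hg3 : gE s 3 = 1-(s:ℤ) := by norm_num [gE]
  have hgt : ∀ j, 4 ≤ j → gE s j = -1 := fun j hj => by
    unfold gE
    rw [if_neg (by omega), if_neg (by omega), if_neg (by omega)]
  funext i
  rw [L6_mulVec, row_split, hg0, hg1, hg2, hg3]
  rcases Nat.lt_or_ge (i:ℕ) 4 with h | h
  · set iv := (i:ℕ) with hiv
    interval_cases iv
    · rw [tail_const s _ 1 (fun j hj => by
        rw [mrowN_zero j, if_neg (by omega), hgt j hj]; ring)]
      norm_num [mrowN, tE]; ring
    · rw [tail_zero s _ (fun j hj => by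
        rw [mrowN_123 1 j (by omega) (by omega), if_neg (by omega), if_neg (by omega), zero_mul])]
      norm_num [mrowN, tE]; ring
    · rw [tail_zero s _ (fun j hj => by
        rw [mrowN_123 2 j (by omega) (by omega), if_neg (by omega), if_neg (by omega), zero_mul])]
      norm_num [mrowN, tE]
    · rw [tail_zero s _ (fun j hj => by
        rw [mrowN_123 3 j (by omega) (by omega), if_neg (by omega), if_neg (by omega), zero_mul])]
      norm_num [mrowN, tE]
  · rw [tail_one_off s _ (i:ℕ) h i.isLt 0 1 (fun j hj => by
      rw [mrowN_big _ j h, if_neg (show ¬j = 0 by omega), if_neg (show ¬j ≤ 3 by omega),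
        hgt j hj]
      split_ifs <;> ring)]
    rw [mrowN_big _ 0 h, mrowN_big _ 1 h, mrowN_big _ 2 h, mrowN_big _ 3 h]
    unfold tE
    norm_num
    intro h1; omega

def gF : ℕ → ℤ := fun j => if j = 0 then -2 else 1
def tF (s : ℕ) : ℕ → ℤ := fun i => if i = 1 ∨ i = 2 ∨ i = 3 then 0 else 2-(s:ℤ)

lemma mulVec_gF (s : ℕ) :
    (L6mat s).mulVec (fun j => gF j) = fun i : Fin (s+5) => tF s i := by
  have hgt : ∀ j, (1:ℕ) ≤ j → gF j = 1 := fun j hj => by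
    unfold gF; rw [if_neg (by omega)]
  funext i
  rw [L6_mulVec, row_split]
  rcases Nat.lt_or_ge (i:ℕ) 4 with h | h
  · set iv := (i:ℕ) with hiv
    interval_cases iv
    · rw [tail_const s _ (-1) (fun j hj => by
        rw [mrowN_zero j, if_neg (by omega), hgt j (by omega)]; ring)]
      norm_num [mrowN, gF, tF]; ring
    · rw [tail_zero s _ (fun j hj => by
        rw [mrowN_123 1 j (by omega) (by omega), if_neg (by omega), if_neg (by omega), zero_mul])]
      norm_num [mrowN, gF, tF]
    · rw [tail_zero s _ (fun j hj => by
        rw [mrowN_123 2 j (by omega) (by omega), if_neg (by omega), if_neg (by omega), zero_mul])]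
      norm_num [mrowN, gF, tF]
    · rw [tail_zero s _ (fun j hj => by
        rw [mrowN_123 3 j (by omega) (by omega), if_neg (by omega), if_neg (by omega), zero_mul])]
      norm_num [mrowN, gF, tF]
  · rw [tail_one_off s _ (i:ℕ) h i.isLt 0 (-1) (fun j hj => by
      rw [mrowN_big _ j h, if_neg (show ¬j = 0 by omega), if_neg (show ¬j ≤ 3 by omega),
        hgt j (by omega)]
      split_ifs <;> ring)]
    rw [mrowN_big _ 0 h, mrowN_big _ 1 h, mrowN_big _ 2 h, mrowN_big _ 3 h]
    unfold gF tF
    norm_num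
    split_ifs <;> [omega; ring]


lemma L6_symm (s : ℕ) : (L6mat s)ᵀ = L6mat s := by
  ext i j
  simp only [L6mat, Matrix.transpose_apply, Matrix.of_apply, Fin.ext_iff]
  split_ifs <;> omega

abbrev Rng (s : ℕ) := LinearMap.range (L6mat s).mulVecLin

lemma memC (s : ℕ) : (fun i : Fin (s+5) => tC i) ∈ Rng s :=
  ⟨fun j => gC j, by rw [Matrix.mulVecLin_apply, mulVec_gC]⟩

lemma memA2 (s : ℕ) : (fun i : Fin (s+5) => tA2 i) ∈ Rng s :=
  ⟨fun j => tA2 j, by rw [Matrix.mulVecLin_apply, mulVec_gA2]⟩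

lemma memA3 (s : ℕ) : (fun i : Fin (s+5) => tA3 i) ∈ Rng s :=
  ⟨fun j => tA3 j, by rw [Matrix.mulVecLin_apply, mulVec_gA3]⟩

lemma memB (s k : ℕ) (hk : 4 ≤ k) (hk' : k < s+5) :
    (fun i : Fin (s+5) => tB k i) ∈ Rng s :=
  ⟨fun j => gB k j, by rw [Matrix.mulVecLin_apply, mulVec_gB s k hk hk']⟩

lemma memE (s : ℕ) : (fun i : Fin (s+5) => tE s i) ∈ Rng s :=
  ⟨fun j => gE s j, by rw [Matrix.mulVecLin_apply, mulVec_gE]⟩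

lemma val_one' (s : ℕ) : ((1 : Fin (s+5)) : ℕ) = 1 := Fin.val_one (s+3)

lemma single_apply' (s : ℕ) (k x : Fin (s+5)) :
    (Pi.single k 1 : Fin (s+5) → ℤ) x = if (x:ℕ) = (k:ℕ) then 1 else 0 := by
  rw [Pi.single_apply]
  simp [Fin.ext_iff]

lemma keyi (s : ℕ) (i : Fin (s+5)) :
    (Pi.single i 1 - gF (i:ℕ) • Pi.single (1 : Fin (s+5)) 1 : Fin (s+5) → ℤ) ∈ Rng s := by
  rcases Nat.lt_or_ge (i:ℕ) 4 with h | h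
  · have : (i:ℕ) = 0 ∨ (i:ℕ) = 1 ∨ (i:ℕ) = 2 ∨ (i:ℕ) = 3 := by omega
    rcases this with hi | hi | hi | hi
    · have e : (Pi.single i 1 - gF (i:ℕ) • Pi.single (1 : Fin (s+5)) 1 : Fin (s+5) → ℤ)
          = fun x : Fin (s+5) => tC ↑x := by
        funext x
        simp only [Pi.sub_apply, Pi.smul_apply, single_apply', hi, val_one', smul_eq_mul, gF, tC]
        norm_num
        simp only [Fin.ext_iff, Fin.val_zero]
        split_ifs <;> omega
      rw [e]; exact memC s
    · have e : (Pi.single i 1 - gF (i:ℕ) • Pi.single (1 : Fin (s+5)) 1 : Fin (s+5) → ℤ)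
          = 0 := by
        funext x
        simp only [Pi.sub_apply, Pi.smul_apply, single_apply', hi, val_one', smul_eq_mul, gF,
          Pi.zero_apply]
        norm_num
      rw [e]; exact zero_mem _
    · have e : (Pi.single i 1 - gF (i:ℕ) • Pi.single (1 : Fin (s+5)) 1 : Fin (s+5) → ℤ)
          = fun x : Fin (s+5) => tA2 ↑x := by
        funext x
        simp only [Pi.sub_apply, Pi.smul_apply, single_apply', hi, val_one', smul_eq_mul, gF, tA2]
        norm_num
        split_ifs <;> omega
      rw [e]; exact memA2 s
    · have e : (Pi.single i 1 - gF (i:ℕ) • Pi.single (1 : Fin (s+5)) 1 : Fin (s+5) → ℤ)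
          = fun x : Fin (s+5) => tA3 ↑x := by
        funext x
        simp only [Pi.sub_apply, Pi.smul_apply, single_apply', hi, val_one', smul_eq_mul, gF, tA3]
        norm_num
        split_ifs <;> omega
      rw [e]; exact memA3 s
  · have e : (Pi.single i 1 - gF (i:ℕ) • Pi.single (1 : Fin (s+5)) 1 : Fin (s+5) → ℤ)
        = fun x : Fin (s+5) => tB (i:ℕ) ↑x := by
      funext x
      simp only [Pi.sub_apply, Pi.smul_apply, single_apply', val_one', smul_eq_mul, gF, tB]
      rw [if_neg (show ¬(i:ℕ) = 0 by omega)]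
      split_ifs <;> omega
    rw [e]; exact memB s (i:ℕ) h i.isLt


lemma main_iso (s : ℕ) (hs : 4 ≤ s) :
    ∃ φ : ((Fin (s+5) → ℤ) ⧸ Rng s) ≃+ ZMod (s-2),
      φ (Submodule.Quotient.mk (Pi.single 1 1)) = 1 ∧
      (Submodule.Quotient.mk (Pi.single 0 1) : (Fin (s+5) → ℤ) ⧸ Rng s)
        = ((s:ℤ) - 4) • (Submodule.Quotient.mk (Pi.single 1 1)
            : (Fin (s+5) → ℤ) ⧸ Rng s) := by
  have hone : ((1 : Fin (s+5)) : ℕ) = 1 := val_one' s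
  set c : Fin (s+5) → ℤ := fun i => gF ↑i with hc
  let f0 : (Fin (s+5) → ℤ) →+ ℤ :=
    { toFun := fun v => c ⬝ᵥ v
      map_zero' := dotProduct_zero c
      map_add' := fun a b => dotProduct_add c a b }
  let fL : (Fin (s+5) → ℤ) →ₗ[ℤ] ZMod (s-2) :=
    ((Int.castAddHom (ZMod (s-2))).comp f0).toIntLinearMap
  have hcast0 : ((2 - (s:ℤ) : ℤ) : ZMod (s-2)) = 0 := by
    have h1 : (2 - (s:ℤ)) = -(((s-2 : ℕ) : ℤ)) := by
      push_cast [Nat.cast_sub (show 2 ≤ s by omega)]; ring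
    rw [h1, Int.cast_neg, Int.cast_natCast, ZMod.natCast_self, neg_zero]
  have hvm : c ᵥ* L6mat s = fun i : Fin (s+5) => tF s ↑i := by
    rw [show L6mat s = (L6mat s)ᵀ from (L6_symm s).symm, Matrix.vecMul_transpose]
    exact mulVec_gF s
  have hker : Rng s ≤ LinearMap.ker fL := by
    rintro x ⟨v, rfl⟩
    rw [LinearMap.mem_ker]
    show ((c ⬝ᵥ (L6mat s).mulVecLin v : ℤ) : ZMod (s-2)) = 0
    rw [Matrix.mulVecLin_apply, Matrix.dotProduct_mulVec, hvm]
    rw [show (fun i : Fin (s+5) => tF s ↑i) ⬝ᵥ v = ∑ j : Fin (s+5), tF s ↑j * v j from rfl,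
      Int.cast_sum]
    refine Finset.sum_eq_zero fun j _ => ?_
    rw [Int.cast_mul]
    suffices h : ((tF s ↑j : ℤ) : ZMod (s-2)) = 0 by rw [h, zero_mul]
    unfold tF
    split_ifs
    · exact Int.cast_zero
    · exact hcast0
  set fbar := (Rng s).liftQ fL hker with hfbar
  set μ1 : (Fin (s+5) → ℤ) ⧸ Rng s := Submodule.Quotient.mk (Pi.single 1 1) with hμ1
  have hm0 : ((s - 2 : ℕ) : ℤ) • μ1 = 0 := by
    rw [hμ1, ← Submodule.Quotient.mk_smul, Submodule.Quotient.mk_eq_zero]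
    have e : ((s-2:ℕ):ℤ) • (Pi.single (1:Fin (s+5)) 1 : Fin (s+5) → ℤ)
        = fun x : Fin (s+5) => tE s ↑x := by
      funext x
      simp only [Pi.smul_apply, single_apply', hone, smul_eq_mul, tE]
      push_cast [Nat.cast_sub (show 2 ≤ s by omega)]
      split_ifs <;> ring
    rw [e]; exact memE s
  let gb : ℤ →+ ((Fin (s+5) → ℤ) ⧸ Rng s) := (zmultiplesHom _) μ1
  have hg : gb ((s-2 : ℕ) : ℤ) = 0 := by
    simpa [gb, zmultiplesHom_apply] using hm0
  let gbar : ZMod (s-2) →+ ((Fin (s+5) → ℤ) ⧸ Rng s) := ZMod.lift (s-2) ⟨gb, hg⟩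
  have hfμ1 : fbar μ1 = 1 := by
    rw [hμ1, hfbar, Submodule.liftQ_apply]
    show ((c ⬝ᵥ Pi.single (1 : Fin (s+5)) 1 : ℤ) : ZMod (s-2)) = 1
    rw [dotProduct_single, hc]
    show ((gF ↑(1 : Fin (s+5)) * 1 : ℤ) : ZMod (s-2)) = 1
    rw [hone]
    norm_num [gF]
  have hgf : ∀ x, gbar (fbar x) = x := by
    intro x
    obtain ⟨v, rfl⟩ := Submodule.Quotient.mk_surjective _ x
    rw [hfbar, Submodule.liftQ_apply]
    show gbar ((c ⬝ᵥ v : ℤ) : ZMod (s-2)) = _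
    rw [show (gbar ((c ⬝ᵥ v : ℤ) : ZMod (s-2))) = gb (c ⬝ᵥ v) from ZMod.lift_coe _ _ _]
    show (c ⬝ᵥ v) • μ1 = _
    have hv : v - (c ⬝ᵥ v) • (Pi.single (1:Fin (s+5)) 1 : Fin (s+5) → ℤ) ∈ Rng s := by
      have h2 : ∀ i : Fin (s+5), v i • (Pi.single i 1 - gF ↑i • Pi.single 1 1 : Fin (s+5) → ℤ)
          = Pi.single i (v i) - (gF ↑i * v i) • Pi.single 1 1 := by
        intro i
        rw [smul_sub, ← Pi.single_smul, smul_eq_mul, mul_one, smul_smul, mul_comm]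
      have e : v - (c ⬝ᵥ v) • (Pi.single (1:Fin (s+5)) 1 : Fin (s+5) → ℤ)
          = ∑ i : Fin (s+5), v i • (Pi.single i 1 - gF ↑i • Pi.single 1 1 : Fin (s+5) → ℤ) := by
        rw [Finset.sum_congr rfl fun i _ => h2 i, Finset.sum_sub_distrib,
          Finset.univ_sum_single, ← Finset.sum_smul]
        rfl
      rw [e]
      exact Submodule.sum_mem _ fun i _ => Submodule.smul_mem _ _ (keyi s i)
    rw [hμ1, ← Submodule.Quotient.mk_smul, Submodule.Quotient.eq]
    have := (Rng s).neg_mem hv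
    rwa [neg_sub] at this
  have hfg : ∀ x : ZMod (s-2), fbar (gbar x) = x := by
    intro x
    obtain ⟨k, rfl⟩ := ZMod.intCast_surjective x
    rw [show (gbar ((k : ℤ) : ZMod (s-2))) = gb k from ZMod.lift_coe _ _ _]
    show fbar (k • μ1) = _
    rw [_root_.map_smul, hfμ1]
    simp
  refine ⟨AddMonoidHom.toAddEquiv fbar.toAddMonoidHom gbar
    (AddMonoidHom.ext hgf) (AddMonoidHom.ext hfg), hfμ1, ?_⟩
  rw [hμ1, ← Submodule.Quotient.mk_smul, Submodule.Quotient.eq]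
  have hmem := (Rng s).sub_mem (memC s) (memE s)
  have e : (fun x : Fin (s+5) => tC ↑x) - (fun x : Fin (s+5) => tE s ↑x)
      = (Pi.single 0 1 - ((s:ℤ)-4) • Pi.single 1 1 : Fin (s+5) → ℤ) := by
    funext x
    simp only [Pi.sub_apply, Pi.smul_apply, single_apply', hone, smul_eq_mul, tC, tE]
    rw [show ((0:Fin (s+5)):ℕ) = 0 from rfl]
    split_ifs <;> first | omega | ring
  rw [← e]
  exact hmem

/-- For `q ≤ -4`, the group `H₁ = coker(L_{-2,q,1})` is isomorphic to `ℤ/(|q|-2)`,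
generated by the class of `μ₂`, and `μ₁ = (|q|-4) · μ₂`. -/
theorem coker_L_minustwo_q_one (q : ℤ) (hq : q ≤ -4) :
    ∃ φ : matrixCoker (L6mat q.natAbs) ≃+ ZMod (q.natAbs - 2),
      φ (mu (L6mat q.natAbs) 1) = 1 ∧
        mu (L6mat q.natAbs) 0 = ((q.natAbs : ℤ) - 4) • mu (L6mat q.natAbs) 1 := by
  have hs : 4 ≤ q.natAbs := by omega
  obtain ⟨φ, h1, h2⟩ := main_iso q.natAbs hs
  exact ⟨φ, by simpa [mu] using h1, by simpa [mu] using h2⟩
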